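/- Let X₁,…,Xₙ, X̂₁,…,X̂ₙ, A₁,…,Aₙ, B₁,…,Bₙ be reals with Aᵢ < Xᵢ ≤ Bᵢ and Aᵢ < X̂ᵢ < Bᵢ for each i, and suppose ∑ᵢ(Bᵢ − Aᵢ) < |∑ᵢ Xᵢ|. Define Ŷᵢ = Xᵢ + ∑_{j≠i} X̂ⱼ. Then for every i, Ŷᵢ has the same (strict) sign as ∑ⱼ Xⱼ; in particular either Ŷᵢ > 0 for all i, or Ŷᵢ < 0 for all i. -/

import Mathlib

/-- Arithmetic core of the unanimity condition: when the total uncertainty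
∑(Bᵢ−Aᵢ) is less than |∑Xᵢ|, every Ŷᵢ = Xᵢ + ∑_{j≠i} X̂ⱼ has the same strict
sign as ∑ⱼ Xⱼ. -/
theorem stmt8 (n : ℕ) (X Xhat A B : Fin n → ℝ)
    (hX : ∀ i, A i < X i ∧ X i ≤ B i)
    (hhat : ∀ i, A i < Xhat i ∧ Xhat i < B i)
    (hsum : ∑ i, (B i - A i) < |∑ i, X i|) :
    (∀ i, 0 < ∑ j, X j → 0 < X i + ∑ j ∈ Finset.univ.erase i, Xhat j) ∧
    (∀ i, ∑ j, X j < 0 → X i + ∑ j ∈ Finset.univ.erase i, Xhat j < 0) := by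
  have key : ∀ i : Fin n,
      |(X i + ∑ j ∈ Finset.univ.erase i, Xhat j) - ∑ j, X j| < |∑ j, X j| := by
    intro i
    have hsplit : ∑ j, X j = X i + ∑ j ∈ Finset.univ.erase i, X j :=
      (Finset.add_sum_erase _ _ (Finset.mem_univ i)).symm
    have heq : (X i + ∑ j ∈ Finset.univ.erase i, Xhat j) - ∑ j, X j
        = ∑ j ∈ Finset.univ.erase i, (Xhat j - X j) := by
      rw [hsplit, Finset.sum_sub_distrib]; ring
    rw [heq]
    calc |∑ j ∈ Finset.univ.erase i, (Xhat j - X j)|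
        ≤ ∑ j ∈ Finset.univ.erase i, |Xhat j - X j| := Finset.abs_sum_le_sum_abs _ _
      _ ≤ ∑ j ∈ Finset.univ.erase i, (B j - A j) := by
          apply Finset.sum_le_sum
          intro j _
          rw [abs_le]
          constructor <;> nlinarith [(hX j).1, (hX j).2, (hhat j).1, (hhat j).2]
      _ ≤ ∑ j, (B j - A j) := by
          apply Finset.sum_le_sum_of_subset_of_nonneg (Finset.erase_subset _ _)
          intro j _ _
          linarith [(hX j).1, (hX j).2]
      _ < |∑ j, X j| := hsum
  constructor
  · intro i hpos
    have := key i
    rw [abs_of_pos hpos] at this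
    have := abs_lt.mp this
    linarith [this.1]
  · intro i hneg
    have := key i
    rw [abs_of_neg hneg] at this
    have := abs_lt.mp this
    linarith [this.2]
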